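/- Let C be a small groupoid. Let Q : C ⥤ Q_C be the coequalizer in Cat of the pair of functors d0, d1 : ∐_{σ} 1 ⇉ C, where the coproduct of copies of the terminal category 1 is indexed by the set of all isomorphisms σ of C, and d0 (respectively d1) sends the object of the σ-indexed copy of 1 to the domain (respectively codomain) of σ. Then Q_C is a skeletal groupoid: every morphism of Q_C is an isomorphism and every isomorphism of Q_C is an automorphism. -/

import Mathlib

open CategoryTheory Limits

universe u

/-- The set of isomorphisms of `C`, used to index a copower of the terminal category:
this coproduct of copies of the terminal category `1` is the discrete category on the
set of isomorphisms of `C`. -/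
def IsoIndex (C : Type u) [Category.{u} C] : Type u := Σ X Y : C, X ≅ Y

/-- The functor `d0` sending the object of the copy of `1` indexed by an isomorphism
`σ` of `C` to the domain of `σ`. -/
def isoDom (C : Type u) [Category.{u} C] :
    Cat.of (Discrete (IsoIndex C)) ⟶ Cat.of C :=
  (Discrete.functor fun σ : IsoIndex C => σ.1).toCatHom

/-- The functor `d1` sending the object of the copy of `1` indexed by an isomorphism
`σ` of `C` to the codomain of `σ`. -/
def isoCod (C : Type u) [Category.{u} C] :
    Cat.of (Discrete (IsoIndex C)) ⟶ Cat.of C :=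
  (Discrete.functor fun σ : IsoIndex C => σ.2.1).toCatHom

namespace SkelCoeq

attribute [local instance] CategoryTheory.isIsomorphicSetoid

variable (C : Type u) [Groupoid.{u} C]

/-- Objects of the concrete coequalizer: isomorphism classes. -/
abbrev QObj : Type u := _root_.Quotient (isIsomorphicSetoid C)

/-- Arrows of the generating quiver: morphisms of `C` with endpoints their classes. -/
structure QArrow (q q' : QObj C) : Type u where
  A : C
  B : C
  f : A ⟶ B
  hA : (⟦A⟧ : QObj C) = q
  hB : (⟦B⟧ : QObj C) = q'

instance : Quiver (QObj C) := ⟨fun q q' => QArrow C q q'⟩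

/-- The relations imposed on the free category on the quiver. -/
inductive QRel : HomRel (Paths (QObj C))
  | id (A : C) :
      QRel (Quiver.Hom.toPath (⟨A, A, 𝟙 A, rfl, rfl⟩ : QArrow C ⟦A⟧ ⟦A⟧))
        (𝟙 ((Paths.of (QObj C)).obj (⟦A⟧ : QObj C)))
  | comp {A B D : C} (f : A ⟶ B) (g : B ⟶ D) :
      QRel (Quiver.Hom.toPath (⟨A, B, f, rfl, rfl⟩ : QArrow C ⟦A⟧ ⟦B⟧) ≫
          Quiver.Hom.toPath (⟨B, D, g, rfl, rfl⟩ : QArrow C ⟦B⟧ ⟦D⟧))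
        (Quiver.Hom.toPath (⟨A, D, f ≫ g, rfl, rfl⟩ : QArrow C ⟦A⟧ ⟦D⟧))

/-- The concrete coequalizer category. -/
def Q : Type u := CategoryTheory.Quotient (QRel C)

instance : Category.{u} (Q C) :=
  inferInstanceAs (Category (CategoryTheory.Quotient (QRel C)))

/-- The projection functor. -/
def pi : C ⥤ Q C where
  obj X := ⟨(Paths.of (QObj C)).obj (⟦X⟧ : QObj C)⟩
  map {X Y} f := (Quotient.functor (QRel C)).map
      (Quiver.Hom.toPath (⟨X, Y, f, rfl, rfl⟩ : QArrow C ⟦X⟧ ⟦Y⟧))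
  map_id X := (CategoryTheory.Quotient.sound _ (QRel.id X)).trans (CategoryTheory.Functor.map_id _ _)
  map_comp {X Y Z} f g := by
    erw [← Functor.map_comp]
    exact (CategoryTheory.Quotient.sound _ (QRel.comp f g)).symm

lemma pi_obj_eq {X Y : C} (e : X ≅ Y) : (pi C).obj X = (pi C).obj Y := by
  have : (⟦X⟧ : QObj C) = ⟦Y⟧ := _root_.Quotient.sound ⟨e⟩
  simp only [pi, this]
  rfl

/-- `pi` as a morphism in `Cat`. -/
def piCat : Cat.of C ⟶ Cat.of (Q C) := (pi C).toCatHom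

lemma myCofork_w : isoDom C ≫ piCat C = isoCod C ≫ piCat C := by
  apply Cat.Hom.ext
  show (Discrete.functor fun σ : IsoIndex C => σ.1) ⋙ pi C =
    (Discrete.functor fun σ : IsoIndex C => σ.2.1) ⋙ pi C
  refine CategoryTheory.Functor.ext (fun σ => pi_obj_eq C σ.as.2.2) ?_
  intro σ σ' f
  obtain ⟨σ⟩ := σ
  obtain ⟨σ'⟩ := σ'
  have h : σ = σ' := Discrete.eq_of_hom f
  subst h
  have : f = 𝟙 _ := Subsingleton.elim _ _
  subst this
  simp

/-- The cofork. -/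
def myCofork : Cofork (isoDom C) (isoCod C) :=
  Cofork.ofπ (piCat C) (myCofork_w C)

section Desc

variable {C}
variable (s : Cofork (isoDom C) (isoCod C))

/-- Object part of the descended functor. -/
def descObj : QObj C → s.pt :=
  _root_.Quotient.lift (fun X => s.π.toFunctor.obj X) (by
    rintro X Y ⟨e⟩
    have h : isoDom C ≫ s.π = isoCod C ≫ s.π := s.condition
    exact Functor.congr_obj (congrArg Cat.Hom.toFunctor h) ⟨(⟨X, Y, e⟩ : IsoIndex C)⟩)

/-- Prefunctor part of the descended functor. -/
def descPre : Prefunctor (QObj C) s.pt where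
  obj := descObj s
  map {q q'} a :=
    match q, q', a with
    | _, _, ⟨_, _, f, rfl, rfl⟩ => s.π.toFunctor.map f

/-- The descended functor. -/
def descFun : Q C ⥤ s.pt :=
  CategoryTheory.Quotient.lift (QRel C) (Paths.lift (descPre s)) (by
    rintro x y f g h
    cases h with
    | id A =>
      rw [Paths.lift_toPath]
      show s.π.toFunctor.map (𝟙 A) = _
      erw [CategoryTheory.Functor.map_id]
      rfl
    | comp f g =>
      erw [Functor.map_comp, Paths.lift_toPath, Paths.lift_toPath, Paths.lift_toPath]
      show s.π.toFunctor.map f ≫ s.π.toFunctor.map g = s.π.toFunctor.map (f ≫ g)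
      erw [Functor.map_comp])

lemma descFun_fac : pi C ⋙ descFun s = s.π.toFunctor := by
  refine CategoryTheory.Functor.ext (fun X => rfl) ?_
  intro X Y f
  have h1 : (pi C ⋙ descFun s).map f =
      (Paths.lift (descPre s)).map
        (Quiver.Hom.toPath (⟨X, Y, f, rfl, rfl⟩ : QArrow C ⟦X⟧ ⟦Y⟧)) := rfl
  rw [h1, Paths.lift_toPath]
  show s.π.toFunctor.map f = _
  exact (Category.comp_id _).symm.trans (Category.id_comp _).symm

/-- Joint epi property of `pi`. -/
lemma pi_cancel {D : Type*} [Category D] (F F' : Q C ⥤ D)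
    (h : pi C ⋙ F = pi C ⋙ F') : F = F' := by
  apply CategoryTheory.Quotient.lift_unique'
  apply Paths.ext_functor
  · intro a b e
    obtain ⟨A, B, f, rfl, rfl⟩ := e
    exact Functor.congr_hom h f
  · funext q
    induction q using _root_.Quotient.inductionOn with
    | h X => exact Functor.congr_obj h X

end Desc

/-- The cofork is a colimit. -/
def myIsColimit : IsColimit (myCofork C) :=
  Cofork.IsColimit.mk _ (fun s => show (myCofork C).pt ⟶ s.pt from (descFun s).toCatHom)
    (fun s => by exact Cat.Hom.ext (descFun_fac s))
    (fun s m w => by exact Cat.Hom.ext (pi_cancel m.toFunctor (descFun s) ((congrArg Cat.Hom.toFunctor w).trans (descFun_fac s).symm)))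

/-- Any path in the generating quiver has equal endpoints. -/
lemma path_eq {q q' : Paths (QObj C)} (p : q ⟶ q') : q = q' := by
  change Quiver.Path (V := QObj C) q q' at p
  induction p with
  | nil => rfl
  | cons p a ih =>
    refine ih.trans ?_
    obtain ⟨A, B, f, rfl, rfl⟩ := a
    exact _root_.Quotient.sound ⟨Groupoid.isoEquivHom _ _ |>.symm f⟩

lemma q_skeletal : Skeletal (Q C) := by
  intro X Y h
  obtain ⟨e⟩ := h
  obtain ⟨p, -⟩ := Quot.exists_rep e.hom
  have h2 : X.as = Y.as := path_eq C p
  cases X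
  cases Y
  cases h2
  rfl

lemma q_isIso_path : ∀ {x y : Paths (QObj C)} (p : x ⟶ y),
    IsIso ((Quotient.functor (QRel C)).map p) := by
  intro x y p
  change Quiver.Path (V := QObj C) x y at p
  induction p with
  | nil =>
    erw [show (Quiver.Path.nil : x ⟶ x) = 𝟙 x from rfl, CategoryTheory.Functor.map_id]
    infer_instance
  | cons p a ih =>
    show IsIso ((Quotient.functor (QRel C)).map (p ≫ Quiver.Hom.toPath a))
    erw [Functor.map_comp]
    have h1 : IsIso ((Quotient.functor (QRel C)).map p) := ih
    obtain ⟨A, B, f, rfl, rfl⟩ := a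
    have h2 : IsIso ((Quotient.functor (QRel C)).map
        (Quiver.Hom.toPath (⟨A, B, f, rfl, rfl⟩ : QArrow C ⟦A⟧ ⟦B⟧))) := by
      refine ⟨(pi C).map (Groupoid.inv f), ?_, ?_⟩
      · show (pi C).map f ≫ (pi C).map (Groupoid.inv f) = _
        rw [← Functor.map_comp]
        simp only [Groupoid.comp_inv, CategoryTheory.Functor.map_id]
        rfl
      · show (pi C).map (Groupoid.inv f) ≫ (pi C).map f = _
        rw [← Functor.map_comp]
        simp only [Groupoid.inv_comp, CategoryTheory.Functor.map_id]
        rfl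
    exact IsIso.comp_isIso

lemma q_isIso {X Y : Q C} (f : X ⟶ Y) : IsIso f := by
  obtain ⟨p, rfl⟩ := Quot.exists_rep f
  exact q_isIso_path C p

end SkelCoeq

/-- If `C` is a groupoid, the coequalizer in `Cat` of the two functors
`d0, d1 : ∐_σ 1 ⇉ C`, indexed by the isomorphisms of `C` and picking out their domains
and codomains, is a skeletal groupoid: every morphism is an isomorphism and every
isomorphism is an automorphism (isomorphic objects are equal). -/
theorem skeletal_groupoid_coequalizer_of_groupoid (C : Type u) [Groupoid.{u} C]
    (c : Cofork (isoDom C) (isoCod C)) (hc : IsColimit c) :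
    (∀ (X Y : c.pt) (f : X ⟶ Y), IsIso f) ∧ Skeletal (c.pt : Type u) := by
  let e : (SkelCoeq.myCofork C).pt ≅ c.pt :=
    IsColimit.coconePointUniqueUpToIso (SkelCoeq.myIsColimit C) hc
  have h2 : (e.inv ≫ e.hom).toFunctor = 𝟭 c.pt := congrArg Cat.Hom.toFunctor e.inv_hom_id
  constructor
  · intro X Y f
    have h := Functor.congr_hom h2.symm f
    simp only [Functor.id_map] at h
    rw [h]
    have : IsIso (e.inv.toFunctor.map f) := SkelCoeq.q_isIso C _
    show IsIso (eqToHom _ ≫ e.hom.toFunctor.map (e.inv.toFunctor.map f) ≫ eqToHom _)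
    infer_instance
  · rintro X Y ⟨iso⟩
    have hXY : e.inv.toFunctor.obj X = e.inv.toFunctor.obj Y :=
      SkelCoeq.q_skeletal C ⟨e.inv.toFunctor.mapIso iso⟩
    calc X = (e.inv ≫ e.hom).toFunctor.obj X := (Functor.congr_obj h2 X).symm
      _ = e.hom.toFunctor.obj (e.inv.toFunctor.obj X) := rfl
      _ = e.hom.toFunctor.obj (e.inv.toFunctor.obj Y) := by rw [hXY]
      _ = (e.inv ≫ e.hom).toFunctor.obj Y := rfl
      _ = Y := Functor.congr_obj h2 Y
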